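/- Let e_{π/2} denote the Born-rule empirical model of the state |diag;π/2,π/4⟩ = (|0⟩⊗|0⟩ + e^{iπ/4}|1⟩⊗|1⟩)/√2 in the two-party Bell scenario in which both Alice's and Bob's two measurements are given by the Pauli bases B_x = {(|0⟩+|1⟩)/√2, (|0⟩−|1⟩)/√2} and B_y = {(|0⟩+i|1⟩)/√2, (|0⟩−i|1⟩)/√2}. Then CF(e_{π/2}) = √2 − 1. -/

import Mathlib

open scoped ComplexConjugate

/-- Standard Hermitian inner product on `ℂ²` (conjugate-linear in the first slot). -/
noncomputable def ip2 (u v : Fin 2 → ℂ) : ℂ := ∑ i, conj (u i) * v i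

/-- Tensor product `u ⊗ v ∈ ℂ² ⊗ ℂ²`, as a function on `Fin 2 × Fin 2`. -/
noncomputable def tens (u v : Fin 2 → ℂ) : Fin 2 × Fin 2 → ℂ := fun p => u p.1 * v p.2

/-- Standard Hermitian inner product on `ℂ² ⊗ ℂ²` (conjugate-linear in the
first slot). -/
noncomputable def ip4 (u v : Fin 2 × Fin 2 → ℂ) : ℂ := ∑ p, conj (u p) * v p

/-- Bloch vector `|θ,φ⟩ = cos(θ/2)|0⟩ + e^{iφ} sin(θ/2)|1⟩`. -/
noncomputable def bloch (θ φ : ℝ) : Fin 2 → ℂ :=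
  ![(Real.cos (θ / 2) : ℂ), Complex.exp (φ * Complex.I) * (Real.sin (θ / 2) : ℂ)]

/-- The orthonormal basis `B(θ,φ) = {|θ,φ⟩, |π−θ,π+φ⟩}` of `ℂ²`, indexed by the
outcome. -/
noncomputable def Bbasis (θ φ : ℝ) : Fin 2 → Fin 2 → ℂ :=
  ![bloch θ φ, bloch (Real.pi - θ) (Real.pi + φ)]

/-- The Born-rule empirical model of the state `ψ ∈ ℂ² ⊗ ℂ²` when Alice's
measurement `a_{i+1}` is given by the orthonormal basis `A i` and Bob's
measurement `b_{j+1}` by the orthonormal basis `B j`: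
`e_{{a_i,b_j}}(s,t) = |⟨α_{i,s} ⊗ β_{j,t}, ψ⟩|²`. -/
noncomputable def born (A B : Fin 2 → Fin 2 → Fin 2 → ℂ) (ψ : Fin 2 × Fin 2 → ℂ) :
    Fin 2 → Fin 2 → Fin 2 → Fin 2 → ℝ := fun i j s t =>
  ‖ip4 (tens (A i s) (B j t)) ψ‖ ^ 2

/-- An empirical model on the two-party Bell scenario: for each context
`{a_{i+1}, b_{j+1}}` a probability distribution on joint outcomes `(s, t)`. -/
def IsModel (e : Fin 2 → Fin 2 → Fin 2 → Fin 2 → ℝ) : Prop :=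
  (∀ i j s t, 0 ≤ e i j s t) ∧ ∀ i j, (∑ s, ∑ t, e i j s t) = 1

/-- Noncontextuality: a global probability distribution on assignments
`g : {a₁,a₂,b₁,b₂} → {0,1}` (with `X` encoded as `Fin 2 ⊕ Fin 2`, `inl i = a_{i+1}`,
`inr j = b_{j+1}`) marginalises to every context. -/
def Noncontextual (e : Fin 2 → Fin 2 → Fin 2 → Fin 2 → ℝ) : Prop :=
  ∃ d : (Fin 2 ⊕ Fin 2 → Fin 2) → ℝ,
    (∀ g, 0 ≤ d g) ∧ (∑ g, d g) = 1 ∧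
    ∀ i j s t, (∑ g ∈ Finset.univ.filter
        (fun g : Fin 2 ⊕ Fin 2 → Fin 2 => g (.inl i) = s ∧ g (.inr j) = t), d g)
      = e i j s t

/-- The noncontextual fraction of an empirical model. -/
noncomputable def NCF (e : Fin 2 → Fin 2 → Fin 2 → Fin 2 → ℝ) : ℝ :=
  sSup {l : ℝ | 0 ≤ l ∧ l ≤ 1 ∧
    ∃ eNC e' : Fin 2 → Fin 2 → Fin 2 → Fin 2 → ℝ,
      IsModel eNC ∧ Noncontextual eNC ∧ IsModel e' ∧
      ∀ i j s t, e i j s t = l * eNC i j s t + (1 - l) * e' i j s t}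

/-- The contextual fraction of an empirical model. -/
noncomputable def CF (e : Fin 2 → Fin 2 → Fin 2 → Fin 2 → ℝ) : ℝ := 1 - NCF e

/-- Diagonal two-qubit state `|diag;θ,φ⟩ = cos(θ/2)|00⟩ + e^{iφ} sin(θ/2)|11⟩`. -/
noncomputable def diagState (θ φ : ℝ) : Fin 2 × Fin 2 → ℂ := fun p =>
  if p = (0, 0) then (Real.cos (θ / 2) : ℂ)
  else if p = (1, 1) then Complex.exp (φ * Complex.I) * (Real.sin (θ / 2) : ℂ)
  else 0

/-- The Pauli `x` basis `{(|0⟩+|1⟩)/√2, (|0⟩−|1⟩)/√2}`. -/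
noncomputable def Bx : Fin 2 → Fin 2 → ℂ :=
  ![![((Real.sqrt 2)⁻¹ : ℂ), ((Real.sqrt 2)⁻¹ : ℂ)],
    ![((Real.sqrt 2)⁻¹ : ℂ), -((Real.sqrt 2)⁻¹ : ℂ)]]

/-- The Pauli `y` basis `{(|0⟩+i|1⟩)/√2, (|0⟩−i|1⟩)/√2}`. -/
noncomputable def By : Fin 2 → Fin 2 → ℂ :=
  ![![((Real.sqrt 2)⁻¹ : ℂ), Complex.I * ((Real.sqrt 2)⁻¹ : ℂ)],
    ![((Real.sqrt 2)⁻¹ : ℂ), -(Complex.I * ((Real.sqrt 2)⁻¹ : ℂ))]]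

/-- Alice's (= Bob's) measurements in the scenario `S(B_x, B_y)`. -/
noncomputable def pauliMeas : Fin 2 → Fin 2 → Fin 2 → ℂ := ![Bx, By]

set_option maxHeartbeats 2000000

def winP (i j s t : Fin 2) : Prop := (s = t) ↔ ¬(i = 1 ∧ j = 1)

instance (i j s t : Fin 2) : Decidable (winP i j s t) := by unfold winP; infer_instance

noncomputable def eModel : Fin 2 → Fin 2 → Fin 2 → Fin 2 → ℝ := fun i j s t =>
  if winP i j s t then (2 + Real.sqrt 2)/8 else (2 - Real.sqrt 2)/8


noncomputable def psi : Fin 2 × Fin 2 → ℂ := fun p =>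
  if p = (0, 0) then (((Real.sqrt 2)⁻¹ : ℝ) : ℂ)
  else if p = (1, 1) then (1/2 + 1/2 * Complex.I) else 0

theorem hpsi : diagState (Real.pi / 2) (Real.pi / 4) = psi := by
  have h2 : Real.sqrt 2 * Real.sqrt 2 = 2 := Real.mul_self_sqrt (by norm_num)
  have hexp : Complex.exp ((Real.pi/4 : ℝ) * Complex.I)
      = (Real.sqrt 2/2 : ℝ) + (Real.sqrt 2/2 : ℝ) * Complex.I := by
    rw [Complex.exp_mul_I, ← Complex.ofReal_cos, ← Complex.ofReal_sin,
      Real.cos_pi_div_four, Real.sin_pi_div_four]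
  have hinv : (Real.sqrt 2)⁻¹ = Real.sqrt 2 / 2 := by
    rw [eq_div_iff (by norm_num : (2:ℝ) ≠ 0), inv_mul_eq_div, div_eq_iff
      (Real.sqrt_pos.mpr (by norm_num)).ne', h2]
  have hC : ((Real.sqrt 2 : ℝ) : ℂ)^2 = 2 := by
    rw [← Complex.ofReal_pow, Real.sq_sqrt (by norm_num : (0:ℝ) ≤ 2)]
    norm_num
  funext p
  simp only [diagState, psi, show Real.pi/2/2 = Real.pi/4 by ring, hexp,
    Real.sin_pi_div_four, Real.cos_pi_div_four, hinv]
  split_ifs with h1 h2'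
  · rfl
  · push_cast
    ring_nf
    rw [hC]
    ring
  · rfl




theorem born_eq : born pauliMeas pauliMeas (diagState (Real.pi / 2) (Real.pi / 4)) = eModel := by
  have h2 : Real.sqrt 2 ^ 2 = 2 := Real.sq_sqrt (by norm_num)
  have h3 : Real.sqrt 2 ^ 3 = 2 * Real.sqrt 2 := by linear_combination Real.sqrt 2 * h2
  have h4 : Real.sqrt 2 ^ 4 = 4 := by linear_combination (Real.sqrt 2 ^ 2 + 2) * h2
  have h5 : Real.sqrt 2 ^ 5 = 4 * Real.sqrt 2 := by
    linear_combination (Real.sqrt 2 ^ 3 + 2 * Real.sqrt 2) * h2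
  have h6 : Real.sqrt 2 ^ 6 = 8 := by
    linear_combination (Real.sqrt 2 ^ 4 + 2 * Real.sqrt 2 ^ 2 + 4) * h2
  rw [hpsi]
  funext i j s t
  fin_cases i <;> fin_cases j <;> fin_cases s <;> fin_cases t <;>
  · simp only [born, ip4, tens, pauliMeas, Bx, By, psi, eModel,
      Fintype.sum_prod_type, Fin.sum_univ_two, Matrix.cons_val_zero, Matrix.cons_val_one,
      Matrix.head_cons]
    norm_num [winP, Complex.sq_norm, Complex.normSq_apply, Prod.ext_iff]
    ring_nf
    simp only [h2, h3, h4, h5, h6]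
    ring_nf




noncomputable def Bfun (e : Fin 2 → Fin 2 → Fin 2 → Fin 2 → ℝ) : ℝ :=
  ∑ i, ∑ j, ∑ s, ∑ t, if winP i j s t then e i j s t else 0

theorem B_eModel : Bfun eModel = 2 + Real.sqrt 2 := by
  simp only [Bfun, eModel, Fin.sum_univ_two]
  norm_num [winP]
  ring

theorem B_model_le (e : Fin 2 → Fin 2 → Fin 2 → Fin 2 → ℝ) (he : IsModel e) :
    Bfun e ≤ 4 := by
  have h1 : ∀ i j : Fin 2, (∑ s, ∑ t, if winP i j s t then e i j s t else 0) ≤ 1 := by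
    intro i j
    calc (∑ s, ∑ t, if winP i j s t then e i j s t else 0)
        ≤ ∑ s, ∑ t, e i j s t := by
          refine Finset.sum_le_sum fun s _ => Finset.sum_le_sum fun t _ => ?_
          split
          · exact le_rfl
          · exact he.1 i j s t
      _ = 1 := he.2 i j
  calc Bfun e ≤ ∑ i : Fin 2, ∑ j : Fin 2, (1:ℝ) :=
        Finset.sum_le_sum fun i _ => Finset.sum_le_sum fun j _ => h1 i j
    _ = 4 := by norm_num [Fin.sum_univ_two]

theorem B_nc_le (e : Fin 2 → Fin 2 → Fin 2 → Fin 2 → ℝ) (he : Noncontextual e) :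
    Bfun e ≤ 3 := by
  obtain ⟨d, hd0, hd1, hdm⟩ := he
  have key : ∀ i j : Fin 2, (∑ s, ∑ t, if winP i j s t then e i j s t else 0)
      = ∑ g : Fin 2 ⊕ Fin 2 → Fin 2,
          if winP i j (g (.inl i)) (g (.inr j)) then d g else 0 := by
    intro i j
    rw [← Finset.sum_fiberwise Finset.univ
      (fun g : Fin 2 ⊕ Fin 2 → Fin 2 => (g (.inl i), g (.inr j)))
      (fun g => if winP i j (g (.inl i)) (g (.inr j)) then d g else 0)]
    rw [Fintype.sum_prod_type]
    refine Finset.sum_congr rfl fun s _ => Finset.sum_congr rfl fun t _ => ?_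
    rw [← hdm i j s t]
    have hfilter : (Finset.univ.filter
        (fun g : Fin 2 ⊕ Fin 2 → Fin 2 => (g (.inl i), g (.inr j)) = (s, t)))
        = Finset.univ.filter
        (fun g : Fin 2 ⊕ Fin 2 → Fin 2 => g (.inl i) = s ∧ g (.inr j) = t) := by
      apply Finset.filter_congr; intro g _; simp [Prod.ext_iff]
    rw [hfilter]
    have step1 : ∀ g ∈ Finset.univ.filter
        (fun g : Fin 2 ⊕ Fin 2 → Fin 2 => g (.inl i) = s ∧ g (.inr j) = t),
        (if winP i j (g (.inl i)) (g (.inr j)) then d g else 0)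
          = (if winP i j s t then d g else 0) := by
      intro g hg
      simp only [Finset.mem_filter] at hg
      rw [hg.2.1, hg.2.2]
    rw [Finset.sum_congr rfl step1]
    by_cases hc : winP i j s t <;> simp [hc]
  have hBe : Bfun e = ∑ g : Fin 2 ⊕ Fin 2 → Fin 2, ∑ i : Fin 2, ∑ j : Fin 2,
      if winP i j (g (.inl i)) (g (.inr j)) then d g else 0 := by
    simp only [Bfun, key]
    rw [Finset.sum_congr rfl fun i _ => Finset.sum_comm]
    exact Finset.sum_comm
  have hg3 : ∀ g : Fin 2 ⊕ Fin 2 → Fin 2, (∑ i : Fin 2, ∑ j : Fin 2,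
      if winP i j (g (.inl i)) (g (.inr j)) then d g else 0) ≤ 3 * d g := by
    intro g
    have hg := hd0 g
    simp only [Fin.sum_univ_two]
    generalize g (Sum.inl 0) = a0 at *
    generalize g (Sum.inl 1) = a1 at *
    generalize g (Sum.inr 0) = b0 at *
    generalize g (Sum.inr 1) = b1 at *
    fin_cases a0 <;> fin_cases a1 <;> fin_cases b0 <;> fin_cases b1 <;>
      simp [winP] <;> linarith
  calc Bfun e ≤ ∑ g : Fin 2 ⊕ Fin 2 → Fin 2, 3 * d g := by
        rw [hBe]; exact Finset.sum_le_sum fun g _ => hg3 g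
    _ = 3 := by rw [← Finset.mul_sum, hd1, mul_one]

noncomputable def eNC : Fin 2 → Fin 2 → Fin 2 → Fin 2 → ℝ := fun i j s t =>
  if winP i j s t then 3/8 else 1/8

noncomputable def ePR : Fin 2 → Fin 2 → Fin 2 → Fin 2 → ℝ := fun i j s t =>
  if winP i j s t then 1/2 else 0

def cnt (g : Fin 2 ⊕ Fin 2 → Fin 2) : ℕ :=
  if (∑ i : Fin 2, ∑ j : Fin 2, if winP i j (g (.inl i)) (g (.inr j)) then 1 else 0) = 3
  then 1 else 0

noncomputable def dfun (g : Fin 2 ⊕ Fin 2 → Fin 2) : ℝ := (cnt g : ℝ) / 8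

theorem cnt_filter : ∀ i j s t : Fin 2, (∑ g ∈ Finset.univ.filter
    (fun g : Fin 2 ⊕ Fin 2 → Fin 2 => g (.inl i) = s ∧ g (.inr j) = t), cnt g)
    = if winP i j s t then 3 else 1 := by decide

theorem cnt_total : (∑ g : Fin 2 ⊕ Fin 2 → Fin 2, cnt g) = 8 := by decide

theorem eNC_nc : Noncontextual eNC := by
  refine ⟨dfun, fun g => by unfold dfun; positivity, ?_, ?_⟩
  · rw [show (∑ g, dfun g) = ((∑ g : Fin 2 ⊕ Fin 2 → Fin 2, cnt g : ℕ) : ℝ)/8 by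
      rw [Nat.cast_sum, Finset.sum_div]; rfl]
    rw [cnt_total]; norm_num
  · intro i j s t
    rw [show (∑ g ∈ Finset.univ.filter
        (fun g : Fin 2 ⊕ Fin 2 → Fin 2 => g (.inl i) = s ∧ g (.inr j) = t), dfun g)
        = ((∑ g ∈ Finset.univ.filter
        (fun g : Fin 2 ⊕ Fin 2 → Fin 2 => g (.inl i) = s ∧ g (.inr j) = t), cnt g : ℕ) : ℝ)/8 by
      rw [Nat.cast_sum, Finset.sum_div]; rfl]
    rw [cnt_filter]
    unfold eNC
    by_cases hc : winP i j s t <;> simp [hc]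

theorem eNC_model : IsModel eNC := by
  constructor
  · intro i j s t; unfold eNC; split <;> norm_num
  · intro i j
    fin_cases i <;> fin_cases j <;>
      simp [eNC, Fin.sum_univ_two, winP] <;> norm_num

theorem ePR_model : IsModel ePR := by
  constructor
  · intro i j s t; unfold ePR; split <;> norm_num
  · intro i j
    fin_cases i <;> fin_cases j <;>
      simp [ePR, Fin.sum_univ_two, winP] <;> norm_num

theorem decomp : ∀ i j s t, eModel i j s t
    = (2 - Real.sqrt 2) * eNC i j s t + (1 - (2 - Real.sqrt 2)) * ePR i j s t := by
  intro i j s t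
  unfold eModel eNC ePR
  by_cases hc : winP i j s t <;> simp only [hc, if_true, if_false, if_pos, if_neg, not_false_iff] <;> ring

theorem sqrt2_bounds : 1 ≤ Real.sqrt 2 ∧ Real.sqrt 2 ≤ 2 := by
  constructor
  · nlinarith [Real.sq_sqrt (by norm_num : (0:ℝ) ≤ 2), Real.sqrt_nonneg 2]
  · nlinarith [Real.sq_sqrt (by norm_num : (0:ℝ) ≤ 2), Real.sqrt_nonneg 2]

theorem mem_S : (2 - Real.sqrt 2) ∈ {l : ℝ | 0 ≤ l ∧ l ≤ 1 ∧
    ∃ eNC' e' : Fin 2 → Fin 2 → Fin 2 → Fin 2 → ℝ,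
      IsModel eNC' ∧ Noncontextual eNC' ∧ IsModel e' ∧
      ∀ i j s t, eModel i j s t = (2 - Real.sqrt 2) * eNC' i j s t
        + (1 - (2 - Real.sqrt 2)) * e' i j s t} := by
  obtain ⟨hb1, hb2⟩ := sqrt2_bounds
  exact ⟨by linarith, by linarith, eNC, ePR, eNC_model, eNC_nc, ePR_model, decomp⟩

theorem upper (l : ℝ) (hl : l ∈ {l : ℝ | 0 ≤ l ∧ l ≤ 1 ∧
    ∃ eNC' e' : Fin 2 → Fin 2 → Fin 2 → Fin 2 → ℝ,
      IsModel eNC' ∧ Noncontextual eNC' ∧ IsModel e' ∧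
      ∀ i j s t, eModel i j s t = l * eNC' i j s t + (1 - l) * e' i j s t}) :
    l ≤ 2 - Real.sqrt 2 := by
  obtain ⟨h0, h1, f, e', hfm, hfnc, he'm, hdec⟩ := hl
  have hB : Bfun eModel = l * Bfun f + (1 - l) * Bfun e' := by
    have hsplit : ∀ (i j s t : Fin 2), (if winP i j s t then eModel i j s t else 0)
        = l * (if winP i j s t then f i j s t else 0)
          + (1 - l) * (if winP i j s t then e' i j s t else 0) := by
      intro i j s t
      by_cases hc : winP i j s t <;> simp [hc, hdec i j s t]
    simp only [Bfun, hsplit, Finset.sum_add_distrib, ← Finset.mul_sum]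
  have h2 : Bfun eModel = 2 + Real.sqrt 2 := B_eModel
  have h3 : Bfun f ≤ 3 := B_nc_le f hfnc
  have h4 : Bfun e' ≤ 4 := B_model_le e' he'm
  nlinarith [h2, h3, h4]

theorem NCF_eModel : NCF eModel = 2 - Real.sqrt 2 := by
  unfold NCF
  apply le_antisymm
  · exact csSup_le ⟨_, mem_S⟩ upper
  · exact le_csSup ⟨1, fun l hl => hl.2.1⟩ mem_S

/-- the contextual fraction of `|diag;π/2,π/4⟩` with respect to
the scenario `S(B_x, B_y)` equals `√2 − 1`. -/
theorem diag_half_pi_contextual_fraction :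
    CF (born pauliMeas pauliMeas (diagState (Real.pi / 2) (Real.pi / 4)))
      = Real.sqrt 2 - 1 := by
  unfold CF
  rw [born_eq, NCF_eModel]
  ring
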